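/- Let X be a uniformly discrete metric space with a translation-like right action of a finitely generated group G, and let H be a group bi-Lipschitz equivalent to G via F : H → G. Equip X with the induced translation-like H-action (using orbit representatives: h·(x·g) = x·F(F⁻¹(g)·h⁻¹)). Then two points of X lie in the same G-orbit iff they lie in the same H-orbit, and the identity map descends to a bi-Lipschitz equivalence (in fact an isometry of chain metrics) between X/G and X/H. -/

import Mathlib

/-- A translation-like (right) action of a group `K` on a metric space `X`. -/
def RightTranslationLike {K X : Type*} [Group K] [MetricSpace X]
    (α : K → X → X) : Prop :=
  (∀ x, α 1 x = x) ∧ (∀ k₁ k₂ x, α (k₁ * k₂) x = α k₂ (α k₁ x)) ∧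
  (∀ k x, α k x = x → k = 1) ∧ ∀ k, ∃ C : ℝ, ∀ x, dist x (α k x) ≤ C

/-- A chain from `x` to `y` relative to the action `α`. -/
def IsChainFrom {K X : Type*} (α : K → X → X) (x y : X)
    (l : List (X × X)) : Prop :=
  (l.map Prod.fst).head? = some x ∧ (l.map Prod.snd).getLast? = some y ∧
  l.Chain' (fun p q => ∃ k : K, α k p.2 = q.1)

/-- The chain distance on the orbit space. -/
noncomputable def chainDist {K X : Type*} [MetricSpace X] (α : K → X → X)
    (x y : X) : ℝ :=
  sInf {s : ℝ | ∃ l : List (X × X), IsChainFrom α x y l ∧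
    s = (l.map fun p => dist p.1 p.2).sum}

/-- Let `X` be uniformly discrete with a translation-like (right)
action `α` of a finitely generated group `G` (word metric: left-invariant with
finite balls), and let `H` be bi-Lipschitz to `G` via `F : H ≃ G`.  Then `X`
carries an induced translation-like `H`-action `β` whose orbits agree with the
`G`-orbits and whose chain metric coincides with that of the `G`-action, so the
identity descends to a bi-Lipschitz equivalence (in fact an isometry) between
`X/G` and `X/H`. -/
theorem quotient_biLipschitz_of_biLipschitz_group
    {H G X : Type*} [Group H] [Group G]
    [MetricSpace H] [MetricSpace G] [MetricSpace X]
    (hinvH : ∀ a b c : H, dist (a * b) (a * c) = dist b c)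
    (hinvG : ∀ a b c : G, dist (a * b) (a * c) = dist b c)
    (hfinG : ∀ R : ℝ, {g : G | dist 1 g ≤ R}.Finite)
    (hud : ∃ ε > (0 : ℝ), ∀ x y : X, x ≠ y → ε ≤ dist x y)
    (F : H ≃ G) (C : ℝ) (hC : 1 ≤ C)
    (hbil : ∀ a b : H, dist a b / C ≤ dist (F a) (F b) ∧
      dist (F a) (F b) ≤ C * dist a b)
    (α : G → X → X) (hα : RightTranslationLike α) :
    ∃ β : H → X → X, RightTranslationLike β ∧
      (∀ x y : X, (∃ g, α g x = y) ↔ (∃ h, β h x = y)) ∧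
      (∀ x y : X, chainDist α x y = chainDist β x y) := by
  classical
  obtain ⟨hα1, hαm, hαf, hαb⟩ := hα
  -- injectivity of the action in the group variable
  have hinj : ∀ (k₁ k₂ : G) (x : X), α k₁ x = α k₂ x → k₁ = k₂ := by
    intro k₁ k₂ x h
    have h1 : α (k₁⁻¹ * k₂) (α k₁ x) = α k₁ x := by
      rw [← hαm, mul_inv_cancel_left, h]
    have h2 := hαf _ _ h1
    have h3 : k₁ * (k₁⁻¹ * k₂) = k₁ * 1 := by rw [h2]
    rw [mul_inv_cancel_left, mul_one] at h3
    exact h3.symm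
  -- the orbit setoid
  let s : Setoid X :=
    ⟨fun x y => ∃ g, α g x = y,
      ⟨fun x => ⟨1, hα1 x⟩,
       fun {x y} h => by
        obtain ⟨g, hg⟩ := h
        exact ⟨g⁻¹, by rw [← hg, ← hαm, mul_inv_cancel, hα1]⟩,
       fun {x y z} h1 h2 => by
        obtain ⟨g₁, hg₁⟩ := h1; obtain ⟨g₂, hg₂⟩ := h2
        exact ⟨g₁ * g₂, by rw [hαm, hg₁, hg₂]⟩⟩⟩
  -- representative of each orbit
  let rep : X → X := fun x => (Quotient.mk s x).out
  have hrep : ∀ x, ∃ g, α g (rep x) = x := by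
    intro x
    exact Quotient.exact (Quotient.out_eq (Quotient.mk s x))
  have hrepa : ∀ (k : G) (x : X), rep (α k x) = rep x := by
    intro k x
    have : Quotient.mk s (α k x) = Quotient.mk s x :=
      Quotient.sound (Setoid.symm ⟨k, rfl⟩)
    simp only [rep, this]
  let gx : X → G := fun x => (hrep x).choose
  have hgx : ∀ x, α (gx x) (rep x) = x := fun x => (hrep x).choose_spec
  have guniq : ∀ (x : X) (k : G), α k (rep x) = x → k = gx x := by
    intro x k hk
    exact hinj k (gx x) (rep x) (by rw [hk, hgx])
  -- the induced H-action
  let β : H → X → X := fun h x => α (F (F.symm (gx x) * h)) (rep x)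
  have hβorbit : ∀ (h : H) (x : X),
      β h x = α ((gx x)⁻¹ * F (F.symm (gx x) * h)) x := by
    intro h x
    have e := hαm (gx x) ((gx x)⁻¹ * F (F.symm (gx x) * h)) (rep x)
    rw [mul_inv_cancel_left, hgx] at e
    exact e
  have hrepβ : ∀ (h : H) (x : X), rep (β h x) = rep x := by
    intro h x
    rw [hβorbit, hrepa]
  have hgxβ : ∀ (h : H) (x : X), gx (β h x) = F (F.symm (gx x) * h) := by
    intro h x
    refine (guniq (β h x) _ ?_).symm
    rw [hrepβ]
  have hrtl : RightTranslationLike β := by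
    refine ⟨?_, ?_, ?_, ?_⟩
    · intro x
      show α (F (F.symm (gx x) * 1)) (rep x) = x
      rw [mul_one, F.apply_symm_apply, hgx]
    · intro h₁ h₂ x
      show α (F (F.symm (gx x) * (h₁ * h₂))) (rep x)
        = α (F (F.symm (gx (β h₁ x)) * h₂)) (rep (β h₁ x))
      rw [hrepβ, hgxβ, F.symm_apply_apply, mul_assoc]
    · intro h x hx
      have hx' : α (F (F.symm (gx x) * h)) (rep x) = α (gx x) (rep x) := by
        rw [hgx]; exact hx
      have := hinj _ _ _ hx'
      have h2 : F.symm (gx x) * h = F.symm (gx x) := by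
        have := congrArg F.symm this
        rwa [F.symm_apply_apply] at this
      exact (mul_eq_left).mp h2
    · intro h
      have hfin : {g' : G | dist 1 g' ≤ C * dist 1 h}.Finite := hfinG _
      let T := hfin.toFinset
      let c : G → ℝ := fun k => (hαb k).choose
      have hc : ∀ k x, dist x (α k x) ≤ c k := fun k => (hαb k).choose_spec
      refine ⟨∑ k ∈ T, max (c k) 0, ?_⟩
      intro x
      set k := (gx x)⁻¹ * F (F.symm (gx x) * h) with hk
      have hkm : k ∈ T := by
        have e1 : dist 1 k = dist (gx x) (F (F.symm (gx x) * h)) := by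
          have e := hinvG (gx x) 1 k
          rw [mul_one, hk, mul_inv_cancel_left] at e
          exact e.symm
        have e2 : dist (F (F.symm (gx x))) (F (F.symm (gx x) * h))
            ≤ C * dist (F.symm (gx x)) (F.symm (gx x) * h) :=
          (hbil _ _).2
        rw [F.apply_symm_apply] at e2
        have e3 : dist (F.symm (gx x)) (F.symm (gx x) * h) = dist 1 h := by
          have e := hinvH (F.symm (gx x)) 1 h
          rwa [mul_one] at e
        rw [e3] at e2
        simp only [T, Set.Finite.mem_toFinset, Set.mem_setOf_eq]
        rw [e1]
        exact e2
      calc dist x (β h x) = dist x (α k x) := by rw [hβorbit]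
        _ ≤ c k := hc k x
        _ ≤ max (c k) 0 := le_max_left _ _
        _ ≤ ∑ k ∈ T, max (c k) 0 :=
            Finset.single_le_sum (f := fun k' => max (c k') 0)
              (fun _ _ => le_max_right _ _) hkm
  -- orbits agree
  have horb : ∀ x y : X, (∃ g, α g x = y) ↔ (∃ h, β h x = y) := by
    intro x y
    constructor
    · rintro ⟨g, rfl⟩
      refine ⟨(F.symm (gx x))⁻¹ * F.symm (gx x * g), ?_⟩
      show α (F (F.symm (gx x) * ((F.symm (gx x))⁻¹ * F.symm (gx x * g)))) (rep x)
        = α g x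
      rw [mul_inv_cancel_left, F.apply_symm_apply, hαm, hgx]
    · rintro ⟨h, rfl⟩
      exact ⟨(gx x)⁻¹ * F (F.symm (gx x) * h), (hβorbit h x).symm⟩
  refine ⟨β, hrtl, horb, ?_⟩
  -- chain metrics agree
  have hrel : (fun (p q : X × X) => ∃ k : G, α k p.2 = q.1)
      = fun p q => ∃ k : H, β k p.2 = q.1 := by
    funext p q
    exact propext (horb p.2 q.1)
  have hiff : ∀ (x y : X) (l : List (X × X)),
      IsChainFrom α x y l ↔ IsChainFrom β x y l := by
    intro x y l
    unfold IsChainFrom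
    rw [hrel]
  intro x y
  unfold chainDist
  congr 1
  ext r
  simp only [Set.mem_setOf_eq, hiff]
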